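/- The game with individual billing b_i(Θ) = Σ_t (λ_imp^t l_i^{t+} − λ_exp^t l_i^{t−} + α l_i^t L^t) + β p̄_i, where L^t = Σ_j l_j^t, is an exact potential game with potential P(Θ) = f(Θ) − (α/2) Σ_t Σ_i l_i^t L_{-i}^t, where f(Θ) = Σ_t [Σ_i (λ_imp^t l_i^{t+} − λ_exp^t l_i^{t−}) + α (L^t)^2] + Σ_i β p̄_i and L_{-i}^t = Σ_{j≠i} l_j^t. -/

import Mathlib

open Finset

/-- A strategy of a member: positive net loads `l⁺`, negative net loads `l⁻` over the
time horizon, and the auxiliary peak variable `p̄`. -/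
abbrev Strat (T : ℕ) : Type := (Fin T → ℝ) × (Fin T → ℝ) × ℝ

/-- Net load `l_i^t = l_i^{t+} - l_i^{t-}`. -/
def netload {N T : ℕ} (Θ : Fin N → Strat T) (i : Fin N) (t : Fin T) : ℝ :=
  (Θ i).1 t - (Θ i).2.1 t

/-- Aggregate net load `L^t = ∑_i l_i^t`. -/
def aggload {N T : ℕ} (Θ : Fin N → Strat T) (t : Fin T) : ℝ :=
  ∑ i, netload Θ i t

/-- Continuous proportional individual bill `b_i^{CP1}`. -/
def bill {N T : ℕ} (lamImp lamExp : Fin T → ℝ) (α β : ℝ)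
    (Θ : Fin N → Strat T) (i : Fin N) : ℝ :=
  (∑ t, (lamImp t * (Θ i).1 t - lamExp t * (Θ i).2.1 t + α * netload Θ i t * aggload Θ t))
    + β * (Θ i).2.2

/-- Total community cost `f¹`. -/
def totalCost {N T : ℕ} (lamImp lamExp : Fin T → ℝ) (α β : ℝ)
    (Θ : Fin N → Strat T) : ℝ :=
  (∑ t, ((∑ i, (lamImp t * (Θ i).1 t - lamExp t * (Θ i).2.1 t)) + α * (aggload Θ t) ^ 2))
    + ∑ i, β * (Θ i).2.2

/-- Exact potential `P = f¹ - (α/2) ∑_t ∑_i l_i^t L_{-i}^t`. -/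
noncomputable def potential {N T : ℕ} (lamImp lamExp : Fin T → ℝ) (α β : ℝ)
    (Θ : Fin N → Strat T) : ℝ :=
  totalCost lamImp lamExp α β Θ -
    α / 2 * ∑ t, ∑ i, netload Θ i t * (aggload Θ t - netload Θ i t)

/-- Sum difference when two functions agree off one point. -/
lemma sum_point_diff {N : ℕ} (f g : Fin N → ℝ) (i : Fin N)
    (h : ∀ j, j ≠ i → f j = g j) :
    ∑ j, f j = (∑ j, g j) + (f i - g i) := by
  classical
  rw [← Finset.add_sum_erase _ f (Finset.mem_univ i),
      ← Finset.add_sum_erase _ g (Finset.mem_univ i),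
      Finset.sum_congr rfl fun j hj => h j (Finset.ne_of_mem_erase hj)]
  ring

/-- `∑_j l_j (L - l_j) = L² - ∑_j l_j²`. -/
lemma innerSumSq {N T : ℕ} (Θ : Fin N → Strat T) (t : Fin T) :
    ∑ j, netload Θ j t * (aggload Θ t - netload Θ j t) =
      (aggload Θ t) ^ 2 - ∑ j, (netload Θ j t) ^ 2 := by
  simp only [mul_sub, Finset.sum_sub_distrib, ← Finset.sum_mul, sq]
  rw [aggload]

/-- The continuous proportional billing game is an exact potential game with potential
`P(Θ) = f(Θ) - (α/2) ∑_t ∑_i l_i^t L_{-i}^t`. -/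
theorem stmt9 (N T : ℕ) (α β : ℝ) (hα : 0 < α) (hβ : 0 < β)
    (lamImp lamExp : Fin T → ℝ) :
    ∀ (i : Fin N) (Θ : Fin N → Strat T) (s' : Strat T),
      bill lamImp lamExp α β (Function.update Θ i s') i - bill lamImp lamExp α β Θ i =
        potential lamImp lamExp α β (Function.update Θ i s') -
          potential lamImp lamExp α β Θ := by
  intro i Θ s'
  classical
  set Θ' := Function.update Θ i s' with hΘ'
  have hΘ'i : Θ' i = s' := Function.update_self i s' Θ
  have hΘ'j : ∀ j, j ≠ i → Θ' j = Θ j := fun j hj => Function.update_of_ne hj s' Θ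
  have hnli : ∀ t, netload Θ' i t = s'.1 t - s'.2.1 t := by
    intro t; simp [netload, hΘ'i]
  have hnlj : ∀ j, j ≠ i → ∀ t, netload Θ' j t = netload Θ j t := by
    intro j hj t; simp [netload, hΘ'j j hj]
  have hagg : ∀ t, aggload Θ' t =
      aggload Θ t + ((s'.1 t - s'.2.1 t) - netload Θ i t) := by
    intro t
    have := sum_point_diff (fun j => netload Θ' j t) (fun j => netload Θ j t) i
      (fun j hj => hnlj j hj t)
    simpa [aggload, hnli t] using this
  have hsq : ∀ t, ∑ j, (netload Θ' j t) ^ 2 =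
      (∑ j, (netload Θ j t) ^ 2) + ((s'.1 t - s'.2.1 t) ^ 2 - (netload Θ i t) ^ 2) := by
    intro t
    have := sum_point_diff (fun j => (netload Θ' j t) ^ 2) (fun j => (netload Θ j t) ^ 2) i
      (fun j hj => by rw [hnlj j hj t])
    simpa [hnli t] using this
  have hlam : ∀ t, ∑ j, (lamImp t * (Θ' j).1 t - lamExp t * (Θ' j).2.1 t) =
      (∑ j, (lamImp t * (Θ j).1 t - lamExp t * (Θ j).2.1 t)) +
        ((lamImp t * s'.1 t - lamExp t * s'.2.1 t) -
          (lamImp t * (Θ i).1 t - lamExp t * (Θ i).2.1 t)) := by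
    intro t
    have := sum_point_diff (fun j => lamImp t * (Θ' j).1 t - lamExp t * (Θ' j).2.1 t)
      (fun j => lamImp t * (Θ j).1 t - lamExp t * (Θ j).2.1 t) i
      (fun j hj => by rw [hΘ'j j hj])
    simpa [hΘ'i] using this
  have hbeta : ∑ j, β * (Θ' j).2.2 =
      (∑ j, β * (Θ j).2.2) + (β * s'.2.2 - β * (Θ i).2.2) := by
    have := sum_point_diff (fun j => β * (Θ' j).2.2) (fun j => β * (Θ j).2.2) i
      (fun j hj => by rw [hΘ'j j hj])
    simpa [hΘ'i] using this
  -- abbreviations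
  set a : Fin T → ℝ := fun t => s'.1 t - s'.2.1 t with ha
  set l : Fin T → ℝ := fun t => netload Θ i t with hl
  set L : Fin T → ℝ := fun t => aggload Θ t with hL
  set S : Fin T → ℝ := fun t => ∑ j, (netload Θ j t) ^ 2 with hS
  set δ : Fin T → ℝ := fun t =>
    (lamImp t * s'.1 t - lamExp t * s'.2.1 t) -
      (lamImp t * (Θ i).1 t - lamExp t * (Θ i).2.1 t) with hδ
  -- Left-hand side
  have lhs_eq : bill lamImp lamExp α β Θ' i - bill lamImp lamExp α β Θ i =
      (∑ t, (δ t + α * (a t * (L t + (a t - l t)) - l t * L t)))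
        + (β * s'.2.2 - β * (Θ i).2.2) := by
    simp only [bill, hΘ'i, hnli, hagg]
    rw [show (∑ t, (lamImp t * s'.1 t - lamExp t * s'.2.1 t +
          α * (s'.1 t - s'.2.1 t) * (aggload Θ t + (s'.1 t - s'.2.1 t - netload Θ i t))))
          + β * s'.2.2 -
        ((∑ t, (lamImp t * (Θ i).1 t - lamExp t * (Θ i).2.1 t +
          α * netload Θ i t * aggload Θ t)) + β * (Θ i).2.2)
      = ((∑ t, (lamImp t * s'.1 t - lamExp t * s'.2.1 t +
          α * (s'.1 t - s'.2.1 t) * (aggload Θ t + (s'.1 t - s'.2.1 t - netload Θ i t)))) -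
        (∑ t, (lamImp t * (Θ i).1 t - lamExp t * (Θ i).2.1 t +
          α * netload Θ i t * aggload Θ t))) + (β * s'.2.2 - β * (Θ i).2.2) from by ring,
      ← Finset.sum_sub_distrib]
    congr 1
    apply Finset.sum_congr rfl
    intro t _
    simp only [hδ, ha, hl, hL]
    ring
  -- Right-hand side
  have rhs_eq : potential lamImp lamExp α β Θ' - potential lamImp lamExp α β Θ =
      (∑ t, (δ t + α * (a t * (L t + (a t - l t)) - l t * L t)))
        + (β * s'.2.2 - β * (Θ i).2.2) := by
    simp only [potential, totalCost]
    have h1 : ∀ (Ξ : Fin N → Strat T), ∑ t, ∑ j, netload Ξ j t * (aggload Ξ t - netload Ξ j t) =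
        ∑ t, ((aggload Ξ t) ^ 2 - ∑ j, (netload Ξ j t) ^ 2) :=
      fun Ξ => Finset.sum_congr rfl fun t _ => innerSumSq Ξ t
    rw [h1 Θ', h1 Θ]
    simp only [hlam, hbeta, hagg, hsq]
    rw [show ((∑ t, ((∑ j, (lamImp t * (Θ j).1 t - lamExp t * (Θ j).2.1 t)) + (δ t)
            + α * (L t + (a t - l t)) ^ 2))
          + ((∑ j, β * (Θ j).2.2) + (β * s'.2.2 - β * (Θ i).2.2)))
        - α / 2 * ∑ t, ((L t + (a t - l t)) ^ 2 - (S t + ((a t) ^ 2 - (l t) ^ 2)))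
        - (((∑ t, ((∑ j, (lamImp t * (Θ j).1 t - lamExp t * (Θ j).2.1 t)) + α * (L t) ^ 2))
          + ∑ j, β * (Θ j).2.2)
        - α / 2 * ∑ t, ((L t) ^ 2 - S t))
      = (((∑ t, ((∑ j, (lamImp t * (Θ j).1 t - lamExp t * (Θ j).2.1 t)) + (δ t)
            + α * (L t + (a t - l t)) ^ 2))
        - (∑ t, ((∑ j, (lamImp t * (Θ j).1 t - lamExp t * (Θ j).2.1 t)) + α * (L t) ^ 2)))
        - α / 2 * ((∑ t, ((L t + (a t - l t)) ^ 2 - (S t + ((a t) ^ 2 - (l t) ^ 2))))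
          - (∑ t, ((L t) ^ 2 - S t))))
        + (β * s'.2.2 - β * (Θ i).2.2) from by ring,
      ← Finset.sum_sub_distrib, ← Finset.sum_sub_distrib, Finset.mul_sum,
      ← Finset.sum_sub_distrib]
    congr 1
    apply Finset.sum_congr rfl
    intro t _
    ring
  rw [lhs_eq, rhs_eq]
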